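/- Let (S,+,·) be a weak ring, and let 𝓕 be a left inverse shift-invariant (for +) and (two-sided) dilation-invariant Ramsey family on S such that β(𝓕) is a subsemigroup of (βS,+). Let ⟨x_n⟩ be an 𝓕-minimal sequence in (S,+) (i.e., ⋂_{m=1}^∞ cl(FS(⟨x_n⟩_{n=m}^∞)) ∩ β(𝓕) ≠ ∅) and A an essential 𝓕*-set in (S,+). Then there exists a sum subsystem ⟨y_n⟩ of ⟨x_n⟩ such that FS(⟨y_n⟩_{n=1}^∞) ∪ AP(⟨y_n⟩_{n=1}^∞) ⊆ A, where AP denotes all finite products of distinct terms in any order. -/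

import Mathlib

open Set

attribute [local instance] Ultrafilter.add Ultrafilter.addSemigroup

/-- Sum of x over the indices a :: l, in the listed (increasing) order. -/
def seqSum {S : Type*} [AddSemigroup S] (x : ℕ → S) (a : ℕ) (l : List ℕ) : S :=
  (l.map x).foldl (· + ·) (x a)

/-- Product of y over the indices a :: l, in the listed order. -/
def seqProd {S : Type*} [Semigroup S] (y : ℕ → S) (a : ℕ) (l : List ℕ) : S :=
  (l.map y).foldl (· * ·) (y a)

/-- FS(⟨x_n⟩_{n=m}^∞): sums over nonempty finite sets of indices ≥ m, in increasing order. -/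
def FSfrom {S : Type*} [AddSemigroup S] (x : ℕ → S) (m : ℕ) : Set S :=
  {s | ∃ (a : ℕ) (l : List ℕ), m ≤ a ∧ List.Chain (· < ·) a l ∧ s = seqSum x a l}

/-- AP(⟨y_n⟩): all products of finitely many distinct terms, in any order, no repetitions. -/
def APset {S : Type*} [Semigroup S] (y : ℕ → S) : Set S :=
  {s | ∃ (a : ℕ) (l : List ℕ), (a :: l).Nodup ∧ s = seqProd y a l}

section ListAux

variable {S : Type*}

theorem seqSum_cons [AddSemigroup S] (x : ℕ → S) (a b : ℕ) (l : List ℕ) :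
    seqSum x a (b :: l) = x a + seqSum x b l := by
  simp only [seqSum, List.map_cons, List.foldl_cons]
  exact List.foldl_assoc

theorem seqSum_append [AddSemigroup S] (x : ℕ → S) (a b : ℕ) (l l' : List ℕ) :
    seqSum x a (l ++ b :: l') = seqSum x a l + seqSum x b l' := by
  simp only [seqSum, List.map_append, List.foldl_append, List.map_cons, List.foldl_cons]
  exact List.foldl_assoc

theorem seqProd_cons [Semigroup S] (y : ℕ → S) (a b : ℕ) (l : List ℕ) :
    seqProd y a (b :: l) = y a * seqProd y b l := by
  simp only [seqProd, List.map_cons, List.foldl_cons]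
  exact List.foldl_assoc

theorem seqProd_append [Semigroup S] (y : ℕ → S) (a b : ℕ) (l l' : List ℕ) :
    seqProd y a (l ++ b :: l') = seqProd y a l * seqProd y b l' := by
  simp only [seqProd, List.map_append, List.foldl_append, List.map_cons, List.foldl_cons]
  exact List.foldl_assoc

theorem seqSum_congr [AddSemigroup S] {x x' : ℕ → S} {a : ℕ} {l : List ℕ}
    (h : ∀ i ∈ a :: l, x i = x' i) : seqSum x a l = seqSum x' a l := by
  simp only [seqSum]
  rw [h a (by simp), List.map_congr_left fun i hi => h i (by simp [hi])]

theorem seqProd_congr [Semigroup S] {x x' : ℕ → S} {a : ℕ} {l : List ℕ}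
    (h : ∀ i ∈ a :: l, x i = x' i) : seqProd x a l = seqProd x' a l := by
  simp only [seqProd]
  rw [h a (by simp), List.map_congr_left fun i hi => h i (by simp [hi])]

theorem le_foldr_max (L : List ℕ) : ∀ i ∈ L, i ≤ L.foldr max 0 := by
  induction L with
  | nil => simp
  | cons a l ih =>
    intro i hi
    rcases List.mem_cons.mp hi with rfl | hi
    · exact le_max_left _ _
    · exact le_trans (ih i hi) (le_max_right _ _)

theorem head_le_of_chain {a : ℕ} {l : List ℕ} (h : List.Chain (· < ·) a l) :
    ∀ j ∈ a :: l, a ≤ j := by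
  intro j hj
  rcases List.mem_cons.mp hj with rfl | hj
  · exact le_refl _
  · exact le_of_lt (List.rel_of_pairwise_cons (List.isChain_iff_pairwise.mp h) hj)

theorem chain_append_of_lt {a b : ℕ} {l l' : List ℕ} (h1 : List.Chain (· < ·) a l)
    (h2 : List.Chain (· < ·) b l') (h : ∀ i ∈ a :: l, i < b) :
    List.Chain (· < ·) a (l ++ b :: l') := by
  unfold List.Chain at h1 h2 ⊢
  rw [List.isChain_iff_pairwise] at h1 h2 ⊢
  rw [show a :: (l ++ b :: l') = (a :: l) ++ (b :: l') from rfl, List.pairwise_append]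
  refine ⟨h1, h2, fun i hi j hj => ?_⟩
  have hb : b ≤ j := by
    rcases List.mem_cons.mp hj with rfl | hj
    · exact le_refl _
    · exact le_of_lt (List.rel_of_pairwise_cons h2 hj)
  exact lt_of_lt_of_le (h i hi) hb

theorem finite_nodupBelow (n : ℕ) : {l : List ℕ | l.Nodup ∧ ∀ i ∈ l, i < n}.Finite := by
  have h1 : {l : List (Fin n) | l.length ≤ n}.Finite := List.finite_length_le _ n
  refine (h1.image (List.map Fin.val)).subset ?_
  rintro l ⟨hnd, hlt⟩
  refine ⟨l.pmap (fun i h => (⟨i, h⟩ : Fin n)) hlt, ?_, ?_⟩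
  · simp only [mem_setOf_eq, List.length_pmap]
    have h2 : l.toFinset ⊆ Finset.range n := by
      intro i hi
      simpa using hlt i (List.mem_toFinset.mp hi)
    have := Finset.card_le_card h2
    rwa [List.toFinset_card_of_nodup hnd, Finset.card_range] at this
  · rw [List.map_pmap]
    exact List.pmap_eq_map _ ▸ l.map_id

end ListAux

section BelowSets

variable {S : Type*}

/-- Finite sums over increasing index lists with all indices `< n`. -/
def FSbelow [AddSemigroup S] (y : ℕ → S) (n : ℕ) : Set S :=
  {s | ∃ (a : ℕ) (l : List ℕ), List.Chain (· < ·) a l ∧ (∀ i ∈ a :: l, i < n) ∧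
    s = seqSum y a l}

/-- Products over nodup index lists with all indices `< n`. -/
def Pbelow [Semigroup S] (y : ℕ → S) (n : ℕ) : Set S :=
  {s | ∃ (a : ℕ) (l : List ℕ), (a :: l).Nodup ∧ (∀ i ∈ a :: l, i < n) ∧
    s = seqProd y a l}

theorem FSbelow_finite [AddSemigroup S] (y : ℕ → S) (n : ℕ) : (FSbelow y n).Finite := by
  refine ((finite_nodupBelow n).image fun L => seqSum y L.headI L.tail).subset ?_
  rintro s ⟨a, l, hch, hlt, rfl⟩
  exact ⟨a :: l, ⟨(List.isChain_iff_pairwise.mp hch).imp ne_of_lt, hlt⟩, rfl⟩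

theorem Pbelow_finite [Semigroup S] (y : ℕ → S) (n : ℕ) : (Pbelow y n).Finite := by
  refine ((finite_nodupBelow n).image fun L => seqProd y L.headI L.tail).subset ?_
  rintro s ⟨a, l, hnd, hlt, rfl⟩
  exact ⟨a :: l, ⟨hnd, hlt⟩, rfl⟩

theorem FSbelow_congr [AddSemigroup S] {y y' : ℕ → S} {n : ℕ}
    (h : ∀ k < n, y k = y' k) : FSbelow y n = FSbelow y' n := by
  ext s
  constructor <;> rintro ⟨a, l, hch, hlt, rfl⟩
  · exact ⟨a, l, hch, hlt, seqSum_congr fun i hi => h i (hlt i hi)⟩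
  · exact ⟨a, l, hch, hlt, (seqSum_congr fun i hi => h i (hlt i hi)).symm⟩

theorem Pbelow_congr [Semigroup S] {y y' : ℕ → S} {n : ℕ}
    (h : ∀ k < n, y k = y' k) : Pbelow y n = Pbelow y' n := by
  ext s
  constructor <;> rintro ⟨a, l, hnd, hlt, rfl⟩
  · exact ⟨a, l, hnd, hlt, seqProd_congr fun i hi => h i (hlt i hi)⟩
  · exact ⟨a, l, hnd, hlt, (seqProd_congr fun i hi => h i (hlt i hi)).symm⟩

theorem FSbelow_succ_subset [AddSemigroup S] (y : ℕ → S) (n : ℕ) (B : Set S)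
    (hold : FSbelow y n ⊆ B) (hy : y n ∈ B)
    (hshift : ∀ s ∈ FSbelow y n, s + y n ∈ B) :
    FSbelow y (n + 1) ⊆ B := by
  rintro s ⟨a, l, hch, hlt, rfl⟩
  by_cases hn : ∀ i ∈ a :: l, i < n
  · exact hold ⟨a, l, hch, hn, rfl⟩
  push_neg at hn
  obtain ⟨i, hi, hin⟩ := hn
  have hieq : i = n := by have := hlt i hi; omega
  have hmemn : n ∈ a :: l := by rwa [hieq] at hi
  have hpw : List.Pairwise (· < ·) (a :: l) := List.isChain_iff_pairwise.mp hch
  obtain ⟨L1, L2, hsplit⟩ := List.append_of_mem hmemn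
  have hL2 : L2 = [] := by
    cases L2 with
    | nil => rfl
    | cons b l2 =>
      exfalso
      have h1 : n < b := by
        rw [hsplit, List.pairwise_append] at hpw
        exact List.rel_of_pairwise_cons hpw.2.1 (by simp)
      have h2 : b < n + 1 := hlt b (by rw [hsplit]; simp)
      omega
  subst hL2
  cases L1 with
  | nil =>
    simp only [List.nil_append] at hsplit
    injection hsplit with h1 h2
    subst h1; subst h2
    exact hy
  | cons c l1 =>
    simp only [List.cons_append] at hsplit
    injection hsplit with h1 h2
    subst h1; subst h2
    rw [show l1 ++ [n] = l1 ++ n :: ([] : List ℕ) from rfl, seqSum_append]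
    have hpw2 : List.Pairwise (· < ·) ((a :: l1) ++ [n]) := by simpa using hpw
    rw [List.pairwise_append] at hpw2
    have hmem : seqSum y a l1 ∈ FSbelow y n :=
      ⟨a, l1, List.isChain_iff_pairwise.mpr hpw2.1, fun j hj => hpw2.2.2 j hj n (by simp), rfl⟩
    exact hshift _ hmem

theorem Pbelow_succ_subset [Semigroup S] (y : ℕ → S) (n : ℕ) (B : Set S)
    (hold : Pbelow y n ⊆ B) (hy : y n ∈ B)
    (hml : ∀ w ∈ Pbelow y n, w * y n ∈ B)
    (hmr : ∀ w ∈ Pbelow y n, y n * w ∈ B)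
    (hmlr : ∀ w1 ∈ Pbelow y n, ∀ w2 ∈ Pbelow y n, w1 * y n * w2 ∈ B) :
    Pbelow y (n + 1) ⊆ B := by
  rintro s ⟨a, l, hnd, hlt, rfl⟩
  by_cases hn : ∀ i ∈ a :: l, i < n
  · exact hold ⟨a, l, hnd, hn, rfl⟩
  push_neg at hn
  obtain ⟨i, hi, hin⟩ := hn
  have hieq : i = n := by have := hlt i hi; omega
  have hmemn : n ∈ a :: l := by rwa [hieq] at hi
  obtain ⟨L1, L2, hsplit⟩ := List.append_of_mem hmemn
  have hnd2 : (L1 ++ n :: L2).Nodup := hsplit ▸ hnd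
  rw [List.nodup_append] at hnd2
  obtain ⟨hndL1, hndn2, hdisj⟩ := hnd2
  have hnL1 : n ∉ L1 := fun h => hdisj n h n (by simp) rfl
  have hnL2 : n ∉ L2 := (List.nodup_cons.mp hndn2).1
  have hndL2 : L2.Nodup := (List.nodup_cons.mp hndn2).2
  have hltL1 : ∀ j ∈ L1, j < n := by
    intro j hj
    have h1 : j < n + 1 := hlt j (by rw [hsplit]; simp [hj])
    have h2 : j ≠ n := fun h => hnL1 (h ▸ hj)
    omega
  have hltL2 : ∀ j ∈ L2, j < n := by
    intro j hj
    have h1 : j < n + 1 := hlt j (by rw [hsplit]; simp [hj])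
    have h2 : j ≠ n := fun h => hnL2 (h ▸ hj)
    omega
  cases L1 with
  | nil =>
    simp only [List.nil_append] at hsplit
    cases L2 with
    | nil =>
      injection hsplit with h1 h2
      subst h1; subst h2
      exact hy
    | cons b l2 =>
      injection hsplit with h1 h2
      subst h1; subst h2
      rw [seqProd_cons]
      refine hmr _ ⟨b, l2, hndL2, fun j hj => hltL2 j hj, rfl⟩
  | cons c l1 =>
    simp only [List.cons_append] at hsplit
    injection hsplit with h1 h2
    subst h1; subst h2
    have hw1 : seqProd y a l1 ∈ Pbelow y n :=
      ⟨a, l1, hndL1, fun j hj => hltL1 j hj, rfl⟩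
    cases L2 with
    | nil =>
      rw [show l1 ++ [n] = l1 ++ n :: ([] : List ℕ) from rfl, seqProd_append]
      exact hml _ hw1
    | cons b l2 =>
      rw [seqProd_append, seqProd_cons, ← mul_assoc]
      exact hmlr _ hw1 _ ⟨b, l2, hndL2, fun j hj => hltL2 j hj, rfl⟩

end BelowSets

section UltraAux

variable {S : Type*} [AddSemigroup S]

theorem mem_add_ultra {B : Set S} {p q : Ultrafilter S} :
    B ∈ p + q ↔ {a | {b | a + b ∈ B} ∈ q} ∈ p := by
  have h := Ultrafilter.eventually_add p q (· ∈ B)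
  simpa only [Filter.Eventually, Ultrafilter.mem_coe, Set.setOf_mem_eq] using h

theorem map_add_ultra (f : S → S) (hf : ∀ a b : S, f (a + b) = f a + f b)
    (p q : Ultrafilter S) :
    Ultrafilter.map f (p + q) = Ultrafilter.map f p + Ultrafilter.map f q := by
  refine Ultrafilter.coe_inj.mp (Filter.ext' fun r => ?_)
  simp only [Ultrafilter.coe_map, Filter.eventually_map, Ultrafilter.eventually_add, hf]

open scoped Classical in
/-- One step of the construction: pick indices representing the next term. -/
noncomputable def buildStep (x : ℕ → S) (Cond : (ℕ → S) → ℕ → Set S) (n : ℕ)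
    (prev : ℕ → ℕ × List ℕ) : ℕ × List ℕ :=
  if h : ∃ q : ℕ × List ℕ,
      ((((Finset.range n).sup fun k => ((prev k).1 :: (prev k).2).foldr max 0) + 1 ≤ q.1) ∧
        List.Chain (· < ·) q.1 q.2) ∧
      seqSum x q.1 q.2 ∈ Cond (fun k => seqSum x (prev k).1 (prev k).2) n
  then h.choose else (0, [])

/-- The recursively constructed sequence of index data. -/
noncomputable def buildSeq (x : ℕ → S) (Cond : (ℕ → S) → ℕ → Set S) : ℕ → ℕ × List ℕ
  | n => buildStep x Cond n fun k => if _ : k < n then buildSeq x Cond k else (0, [])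

theorem buildSeq_eq (x : ℕ → S) (Cond : (ℕ → S) → ℕ → Set S) (n : ℕ) :
    buildSeq x Cond n =
      buildStep x Cond n fun k => if _ : k < n then buildSeq x Cond k else (0, []) := by
  rw [buildSeq]

end UltraAux


/-- in a weak ring (S,+,·), if 𝓕 is a left inverse shift-invariant (for +)
and two-sided dilation-invariant Ramsey family with β(𝓕) a subsemigroup of (βS,+),
⟨x_n⟩ is an 𝓕-minimal sequence in (S,+) and A is an essential 𝓕*-set in (S,+), then there
is a sum subsystem ⟨y_n⟩ of ⟨x_n⟩ with FS(⟨y_n⟩) ∪ AP(⟨y_n⟩) ⊆ A. -/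
theorem weak_ring_F_star_additive_multiplicative {S : Type*} [AddSemigroup S] [Semigroup S]
    (hldistrib : ∀ x y z : S, x * (y + z) = x * y + x * z)
    (hrdistrib : ∀ x y z : S, (x + y) * z = x * z + y * z)
    (F : Set (Set S))
    (hne : F.Nonempty) (h0 : ∅ ∉ F)
    (hup : ∀ A ∈ F, ∀ B : Set S, A ⊆ B → B ∈ F)
    (hram : ∀ A ∈ F, ∀ A₁ A₂ : Set S, A = A₁ ∪ A₂ → A₁ ∈ F ∨ A₂ ∈ F)
    (hinv : ∀ s : S, ∀ E ∈ F, {y : S | s + y ∈ E} ∈ F)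
    (hldil : ∀ s : S, ∀ E ∈ F, (fun t => s * t) '' E ∈ F)
    (hrdil : ∀ s : S, ∀ E ∈ F, (fun t => t * s) '' E ∈ F)
    (hsub : ∀ p q : Ultrafilter S, (∀ A ∈ p, A ∈ F) → (∀ A ∈ q, A ∈ F) →
      ∀ A ∈ p + q, A ∈ F)
    (x : ℕ → S)
    (hmin : ((⋂ m : ℕ, {p : Ultrafilter S | FSfrom x m ∈ p}) ∩
        {p : Ultrafilter S | ∀ A ∈ p, A ∈ F}).Nonempty)
    (A : Set S)
    (hA : ∀ p : Ultrafilter S, p + p = p → (∀ B ∈ p, B ∈ F) → A ∈ p) :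
    ∃ (y : ℕ → S) (H : ℕ → Finset ℕ),
      (∀ n : ℕ, (H n).Nonempty) ∧
      (∀ n : ℕ, ∀ i ∈ H n, ∀ j ∈ H (n + 1), i < j) ∧
      (∀ n : ℕ, ∃ (a : ℕ) (l : List ℕ),
        (H n).sort (· ≤ ·) = a :: l ∧ y n = seqSum x a l) ∧
      FSfrom y 0 ∪ APset y ⊆ A := by
  classical
  set T : Set (Ultrafilter S) :=
    (⋂ m : ℕ, {p : Ultrafilter S | FSfrom x m ∈ p}) ∩
      {p : Ultrafilter S | ∀ A ∈ p, A ∈ F} with hT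
  have hTclosed : IsClosed T := by
    refine IsClosed.inter (isClosed_iInter fun m => ultrafilter_isClosed_basic _) ?_
    have heq : {p : Ultrafilter S | ∀ A ∈ p, A ∈ F} =
        ⋂ (B : Set S) (_ : B ∉ F), {p : Ultrafilter S | Bᶜ ∈ p} := by
      ext p
      simp only [mem_setOf_eq, mem_iInter]
      constructor
      · intro h B hB
        rw [Ultrafilter.compl_mem_iff_notMem]
        exact fun hBp => hB (h B hBp)
      · intro h B hBp
        by_contra hB
        exact Ultrafilter.compl_mem_iff_notMem.mp (h B hB) hBp
    rw [heq]
    exact isClosed_iInter fun B => isClosed_iInter fun _ => ultrafilter_isClosed_basic _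
  have hTadd : ∀ p ∈ T, ∀ q ∈ T, p + q ∈ T := by
    rintro p ⟨hp1, hp2⟩ q ⟨hq1, hq2⟩
    refine ⟨?_, fun B hB => hsub p q hp2 hq2 B hB⟩
    rw [Set.mem_iInter]
    intro m
    show FSfrom x m ∈ p + q
    rw [mem_add_ultra]
    refine Filter.mem_of_superset (Set.mem_iInter.mp hp1 m) ?_
    rintro s ⟨a, l, hma, hch, rfl⟩
    have hsup := le_foldr_max (a :: l)
    refine Filter.mem_of_superset (Set.mem_iInter.mp hq1 ((a :: l).foldr max 0 + 1)) ?_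
    rintro t ⟨b, l', hMb, hch', rfl⟩
    rw [mem_setOf_eq, ← seqSum_append]
    refine ⟨a, l ++ b :: l', hma, chain_append_of_lt hch hch' fun i hi => ?_, rfl⟩
    have := hsup i hi
    omega
  obtain ⟨p, hpT, hpp⟩ :=
    exists_idempotent_in_compact_add_subsemigroup Ultrafilter.continuous_add_left T hmin
      hTclosed.isCompact hTadd
  have hpFS : ∀ m, FSfrom x m ∈ p := fun m => Set.mem_iInter.mp hpT.1 m
  have hpF : ∀ B ∈ p, B ∈ F := hpT.2
  have hAp : A ∈ p := hA p hpp hpF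
  have hpre : ∀ f : S → S, (∀ a b : S, f (a + b) = f a + f b) →
      (∀ E ∈ F, f '' E ∈ F) → f ⁻¹' A ∈ p := by
    intro f hf himg
    have hidem : Ultrafilter.map f p + Ultrafilter.map f p = Ultrafilter.map f p := by
      rw [← map_add_ultra f hf, hpp]
    have hmapF : ∀ B ∈ Ultrafilter.map f p, B ∈ F := by
      intro B hB
      rw [Ultrafilter.mem_map] at hB
      exact hup _ (himg _ (hpF _ hB)) B (Set.image_preimage_subset f B)
    have h := hA _ hidem hmapF
    rwa [Ultrafilter.mem_map] at h
  set As : Set S := A ∩ {s | {t | s + t ∈ A} ∈ p} with hAsdef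
  have hAsp : As ∈ p := by
    have h2 : A ∈ p + p := by rw [hpp]; exact hAp
    rw [mem_add_ultra] at h2
    exact Filter.inter_mem hAp h2
  have hAs_shift : ∀ s ∈ As, {t | s + t ∈ As} ∈ p := by
    intro s hs
    have h1 : {t | s + t ∈ A} ∈ p := hs.2
    have h2 : {t | s + t ∈ A} ∈ p + p := by rw [hpp]; exact h1
    rw [mem_add_ultra] at h2
    have h3 : {t | {u | (s + t) + u ∈ A} ∈ p} ∈ p := by
      refine Filter.mem_of_superset h2 ?_
      intro t ht
      simp only [mem_setOf_eq] at ht ⊢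
      convert ht using 2
      ext u
      simp [add_assoc]
    have h4 := Filter.inter_mem h1 h3
    refine Filter.mem_of_superset h4 ?_
    rintro t ⟨ht1, ht2⟩
    exact ⟨ht1, ht2⟩
  set Cond : (ℕ → S) → ℕ → Set S := fun y n =>
    As ∩ (⋂ s ∈ FSbelow y n, {t | s + t ∈ As}) ∩ (⋂ w ∈ Pbelow y n, {t | w * t ∈ A}) ∩
      (⋂ w ∈ Pbelow y n, {t | t * w ∈ A}) ∩
      (⋂ w1 ∈ Pbelow y n, ⋂ w2 ∈ Pbelow y n, {t | w1 * t * w2 ∈ A}) with hConddef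
  have hCondp : ∀ (y : ℕ → S) (n : ℕ), FSbelow y n ⊆ As → Cond y n ∈ p := by
    intro y n hFS
    refine Filter.inter_mem (Filter.inter_mem (Filter.inter_mem (Filter.inter_mem hAsp ?_) ?_)
      ?_) ?_
    · exact (Filter.biInter_mem (FSbelow_finite y n)).mpr fun s hs => hAs_shift s (hFS hs)
    · exact (Filter.biInter_mem (Pbelow_finite y n)).mpr fun w _ =>
        hpre (fun t => w * t) (hldistrib w) (hldil w)
    · exact (Filter.biInter_mem (Pbelow_finite y n)).mpr fun w _ =>
        hpre (fun t => t * w) (fun a b => hrdistrib a b w) (hrdil w)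
    · refine (Filter.biInter_mem (Pbelow_finite y n)).mpr fun w1 _ => ?_
      refine (Filter.biInter_mem (Pbelow_finite y n)).mpr fun w2 _ => ?_
      have hf : ∀ a b : S, w1 * (a + b) * w2 = w1 * a * w2 + w1 * b * w2 := by
        intro a b
        rw [hldistrib, hrdistrib]
      have himg : ∀ E ∈ F, (fun t => w1 * t * w2) '' E ∈ F := by
        intro E hE
        have heq : (fun t => w1 * t * w2) '' E = (fun t => t * w2) '' ((fun t => w1 * t) '' E) := by
          rw [← Set.image_comp]
          rfl
        rw [heq]
        exact hrdil w2 _ (hldil w1 E hE)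
      exact hpre _ hf himg
  set d : ℕ → ℕ × List ℕ := buildSeq x Cond with hd
  set y : ℕ → S := fun k => seqSum x (d k).1 (d k).2 with hy
  set mIdx : ℕ → ℕ :=
    fun n => ((Finset.range n).sup fun k => ((d k).1 :: (d k).2).foldr max 0) + 1 with hmIdx
  have hyn : ∀ n, y n = seqSum x (d n).1 (d n).2 := fun n => by rw [hy]
  have hkey : ∀ n : ℕ, FSbelow y n ⊆ As →
      mIdx n ≤ (d n).1 ∧ List.Chain (· < ·) (d n).1 (d n).2 ∧ y n ∈ Cond y n := by
    intro n hFS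
    have hCn : Cond y n ∈ p := hCondp y n hFS
    have hnon : (FSfrom x (mIdx n) ∩ Cond y n).Nonempty :=
      Ultrafilter.nonempty_of_mem (Filter.inter_mem (hpFS _) hCn)
    obtain ⟨z, ⟨a, l, hma, hch, rfl⟩, hzC⟩ := hnon
    have hdn0 : d n = buildStep x Cond n fun k => if _ : k < n then d k else (0, []) := by
      rw [hd, buildSeq_eq]
    have hpfeq : ∀ k < n, (if _ : k < n then d k else ((0 : ℕ), ([] : List ℕ))) = d k :=
      fun k hk => dif_pos hk
    have hsupeq : ((Finset.range n).sup fun k =>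
        (((if _ : k < n then d k else ((0 : ℕ), ([] : List ℕ)))).1 ::
          (if _ : k < n then d k else ((0 : ℕ), ([] : List ℕ))).2).foldr max 0) + 1 = mIdx n := by
      rw [hmIdx]
      congr 1
      refine Finset.sup_congr rfl fun k hk => ?_
      rw [hpfeq k (Finset.mem_range.mp hk)]
    have hCondeq : Cond (fun k => seqSum x
        ((if _ : k < n then d k else ((0 : ℕ), ([] : List ℕ)))).1
        ((if _ : k < n then d k else ((0 : ℕ), ([] : List ℕ)))).2) n = Cond y n := by
      have hcg : ∀ k < n, seqSum x
          ((if _ : k < n then d k else ((0 : ℕ), ([] : List ℕ)))).1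
          ((if _ : k < n then d k else ((0 : ℕ), ([] : List ℕ)))).2 = y k := by
        intro k hk
        rw [hpfeq k hk, hyn k]
      simp only [hConddef]
      rw [FSbelow_congr hcg, Pbelow_congr hcg]
    rw [buildStep] at hdn0
    split at hdn0
    case isTrue hex =>
      have hspec := hex.choose_spec
      rw [← hdn0] at hspec
      obtain ⟨⟨hs1, hs2⟩, hs3⟩ := hspec
      rw [hsupeq] at hs1
      rw [hCondeq] at hs3
      rw [← hyn n] at hs3
      exact ⟨hs1, hs2, hs3⟩
    case isFalse hnex =>
      exfalso
      refine hnex ⟨(a, l), ⟨?_, hch⟩, ?_⟩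
      · rw [hsupeq]
        exact hma
      · rw [hCondeq]
        exact hzC
  have hInv : ∀ n : ℕ, FSbelow y n ⊆ As ∧ Pbelow y n ⊆ A := by
    intro n
    induction n with
    | zero =>
      constructor
      · rintro s ⟨a, l, _, hlt, _⟩
        exact absurd (hlt a (by simp)) (by omega)
      · rintro s ⟨a, l, _, hlt, _⟩
        exact absurd (hlt a (by simp)) (by omega)
    | succ n ih =>
      obtain ⟨hFS, hPb⟩ := ih
      obtain ⟨_, _, hyC⟩ := hkey n hFS
      obtain ⟨⟨⟨⟨h1, h2⟩, h3⟩, h4⟩, h5⟩ := hyC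
      have hAsubA : As ⊆ A := fun s hs => hs.1
      constructor
      · exact FSbelow_succ_subset y n As hFS h1 fun s hs => Set.mem_iInter₂.mp h2 s hs
      · refine Pbelow_succ_subset y n A hPb (hAsubA h1) ?_ ?_ ?_
        · exact fun w hw => Set.mem_iInter₂.mp h3 w hw
        · exact fun w hw => Set.mem_iInter₂.mp h4 w hw
        · exact fun w1 hw1 w2 hw2 => Set.mem_iInter₂.mp (Set.mem_iInter₂.mp h5 w1 hw1) w2 hw2
  have hGood : ∀ n, mIdx n ≤ (d n).1 ∧ List.Chain (· < ·) (d n).1 (d n).2 ∧ y n ∈ Cond y n :=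
    fun n => hkey n (hInv n).1
  refine ⟨y, fun n => ((d n).1 :: (d n).2).toFinset, ?_, ?_, ?_, ?_⟩
  · intro n
    exact ⟨(d n).1, by simp⟩
  · intro n i hi j hj
    have hi' : i ∈ (d n).1 :: (d n).2 := List.mem_toFinset.mp hi
    have hj' : j ∈ (d (n + 1)).1 :: (d (n + 1)).2 := List.mem_toFinset.mp hj
    have h1 : i ≤ ((d n).1 :: (d n).2).foldr max 0 := le_foldr_max _ i hi'
    have h2 : ((d n).1 :: (d n).2).foldr max 0 ≤
        (Finset.range (n + 1)).sup fun k => ((d k).1 :: (d k).2).foldr max 0 :=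
      Finset.le_sup (f := fun k => ((d k).1 :: (d k).2).foldr max 0)
        (Finset.mem_range.mpr (Nat.lt_succ_self n))
    have h3 : mIdx (n + 1) ≤ (d (n + 1)).1 := (hGood (n + 1)).1
    have h4 : (d (n + 1)).1 ≤ j := head_le_of_chain (hGood (n + 1)).2.1 j hj'
    simp only [hmIdx] at h3
    omega
  · intro n
    refine ⟨(d n).1, (d n).2, ?_, hyn n⟩
    have hpw := List.isChain_iff_pairwise.mp (hGood n).2.1
    exact (List.toFinset_sort _ (hpw.imp ne_of_lt)).mpr (hpw.imp le_of_lt)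
  · rintro s (⟨a, l, _, hch, rfl⟩ | ⟨a, l, hnd, rfl⟩)
    · have hN := le_foldr_max (a :: l)
      have hmem : seqSum y a l ∈ FSbelow y ((a :: l).foldr max 0 + 1) :=
        ⟨a, l, hch, fun i hi => by have := hN i hi; omega, rfl⟩
      exact ((hInv _).1 hmem).1
    · have hN := le_foldr_max (a :: l)
      have hmem : seqProd y a l ∈ Pbelow y ((a :: l).foldr max 0 + 1) :=
        ⟨a, l, hnd, fun i hi => by have := hN i hi; omega, rfl⟩
      exact (hInv _).2 hmem
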